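/- arXiv:2103.00460 — 2 statements merged into one kernel-verified Lean document; each statement's English description precedes it below -/
import Mathlib

section
/- Steady inf-sup bound in the coincident-domain case: Let Y be a real Hilbert space, a : Y × Y → ℝ bilinear and coercive with constant γ > 0, m : Y × Y → ℝ a symmetric bilinear form, and α with 0 < α ≤ 1. Define B_s((y,p),(z,q)) = a(y,z) - (1/α) m(p,z) + m(y,q) + a(q,p). Then for every (y,p) ∈ Y × Y, B_s((y,p),(α y, p)) ≥ α γ (‖y‖² + ‖p‖²), and consequently sup over (z,q) ≠ 0 of B_s((y,p),(z,q))/√(‖z‖²+‖q‖²) ≥ α γ √(‖y‖²+‖p‖²). -/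
theorem steady_infsup_coincident
    {Y : Type*} [NormedAddCommGroup Y] [InnerProductSpace ℝ Y] [CompleteSpace Y]
    (a m : Y →ₗ[ℝ] Y →ₗ[ℝ] ℝ) (γ α : ℝ)
    (hγ : 0 < γ) (hcoer : ∀ v : Y, a v v ≥ γ * ‖v‖ ^ 2)
    (hsymm : ∀ v w : Y, m v w = m w v)
    (hα₀ : 0 < α) (hα₁ : α ≤ 1) :
    ∀ y p : Y,
      (a y (α • y) - (1 / α) * m p (α • y) + m y p + a p p
          ≥ α * γ * (‖y‖ ^ 2 + ‖p‖ ^ 2)) ∧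
      ((y, p) ≠ (0, 0) →
        ∃ z q : Y, ¬(z = 0 ∧ q = 0) ∧
          a y z - (1 / α) * m p z + m y q + a q p
            ≥ α * γ * Real.sqrt (‖y‖ ^ 2 + ‖p‖ ^ 2) * Real.sqrt (‖z‖ ^ 2 + ‖q‖ ^ 2)) := by
  intro y p
  have key : a y (α • y) - (1 / α) * m p (α • y) + m y p + a p p
      ≥ α * γ * (‖y‖ ^ 2 + ‖p‖ ^ 2) := by
    have h1 : a y (α • y) = α * a y y := by simp
    have h2 : (1 / α) * m p (α • y) = m y p := by
      rw [map_smul]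
      field_simp [hsymm p y]
      rw [smul_eq_mul, hsymm p y]
    rw [h1, h2]
    have hy := hcoer y
    have hp := hcoer p
    have hαp : α * γ * ‖p‖ ^ 2 ≤ a p p := by
      calc α * γ * ‖p‖ ^ 2 ≤ 1 * γ * ‖p‖ ^ 2 := by
            apply mul_le_mul_of_nonneg_right (mul_le_mul_of_nonneg_right hα₁ hγ.le) (by positivity)
        _ = γ * ‖p‖ ^ 2 := by ring
        _ ≤ a p p := hp
    nlinarith [mul_le_mul_of_nonneg_left hy hα₀.le]
  refine ⟨key, fun hne => ⟨α • y, p, ?_, ?_⟩⟩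
  · rintro ⟨hz, hq⟩
    apply hne
    have hy0 : y = 0 := by
      rcases smul_eq_zero.mp hz with h | h
      · exact absurd h hα₀.ne'
      · exact h
    simp [hy0, hq, Prod.ext_iff]
  · have hle : Real.sqrt (‖α • y‖ ^ 2 + ‖p‖ ^ 2) ≤ Real.sqrt (‖y‖ ^ 2 + ‖p‖ ^ 2) := by
      apply Real.sqrt_le_sqrt
      have : ‖α • y‖ ^ 2 ≤ ‖y‖ ^ 2 := by
        rw [norm_smul]
        have : |α| ≤ 1 := abs_le.mpr ⟨by linarith, hα₁⟩
        simp only [Real.norm_eq_abs]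
        nlinarith [norm_nonneg y, abs_nonneg α, mul_le_mul this this (abs_nonneg α) zero_le_one]
      linarith
    have hsq : Real.sqrt (‖y‖ ^ 2 + ‖p‖ ^ 2) * Real.sqrt (‖y‖ ^ 2 + ‖p‖ ^ 2)
        = ‖y‖ ^ 2 + ‖p‖ ^ 2 := Real.mul_self_sqrt (by positivity)
    have hcg : 0 ≤ α * γ := by positivity
    calc α * γ * Real.sqrt (‖y‖ ^ 2 + ‖p‖ ^ 2) * Real.sqrt (‖α • y‖ ^ 2 + ‖p‖ ^ 2)
        ≤ α * γ * Real.sqrt (‖y‖ ^ 2 + ‖p‖ ^ 2) * Real.sqrt (‖y‖ ^ 2 + ‖p‖ ^ 2) := by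
          apply mul_le_mul_of_nonneg_left hle (by positivity)
      _ = α * γ * (‖y‖ ^ 2 + ‖p‖ ^ 2) := by rw [mul_assoc, hsq]
      _ ≤ _ := key
end

section
/- Discrete surjectivity inf-sup with coincident domains: Let Q be a real Hilbert space (playing the role of the discrete space-time space), and let S, A, M : Q × Q → ℝ be bilinear forms with: ∫-type form S satisfying S(v,v) ≥ 0 for all v; A coercive with constant γ > 0; M symmetric. Let 0 < α ≤ 1 and define B((y,p),(z,q)) = S(y,z) + A(y,z) - (1/α) M(p,z) + M(y,q) - S(p,q) + A(q,p). Then for all (y,p) ∈ Q × Q, B((y,p),(α y, p)) ≥ α γ (‖y‖² + ‖p‖²), hence the inf-sup constant of B is at least α γ. -/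
theorem discrete_surjectivity_coincident
    {Q : Type*} [NormedAddCommGroup Q] [InnerProductSpace ℝ Q] [CompleteSpace Q]
    (S A M : Q →ₗ[ℝ] Q →ₗ[ℝ] ℝ) (γ α : ℝ)
    (hγ : 0 < γ) (hcoer : ∀ v : Q, A v v ≥ γ * ‖v‖ ^ 2)
    (hsymm : ∀ v w : Q, M v w = M w v)
    (hα₀ : 0 < α) (hα₁ : α ≤ 1) :
    ∀ y p : Q, S y y ≥ 0 → -S p p ≥ 0 →
      (S y (α • y) + A y (α • y) - (1 / α) * M p (α • y) + M y p - S p p + A p p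
          ≥ α * γ * (‖y‖ ^ 2 + ‖p‖ ^ 2)) ∧
      ((y, p) ≠ (0, 0) →
        ∃ z q : Q, ¬(z = 0 ∧ q = 0) ∧
          S y z + A y z - (1 / α) * M p z + M y q - S p q + A q p
            ≥ α * γ * Real.sqrt (‖y‖ ^ 2 + ‖p‖ ^ 2) * Real.sqrt (‖z‖ ^ 2 + ‖q‖ ^ 2)) := by
  intro y p hSy hSp
  have key : S y (α • y) + A y (α • y) - (1 / α) * M p (α • y) + M y p - S p p + A p p
      ≥ α * γ * (‖y‖ ^ 2 + ‖p‖ ^ 2) := by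
    have h1 : S y (α • y) = α * S y y := by simp [map_smul]
    have h2 : A y (α • y) = α * A y y := by simp [map_smul]
    have h3 : (1 / α) * M p (α • y) = M y p := by
      rw [map_smul]
      field_simp [hsymm p y]
      rw [smul_eq_mul, hsymm p y]
    rw [h1, h2, h3]
    have hA1 : α * A y y ≥ α * (γ * ‖y‖ ^ 2) :=
      mul_le_mul_of_nonneg_left (hcoer y) hα₀.le
    have hA2 : A p p ≥ α * (γ * ‖p‖ ^ 2) := by
      have : α * (γ * ‖p‖ ^ 2) ≤ γ * ‖p‖ ^ 2 := by
        nlinarith [mul_nonneg hγ.le (sq_nonneg ‖p‖)]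
      linarith [hcoer p]
    have hS1 : α * S y y ≥ 0 := mul_nonneg hα₀.le hSy
    nlinarith
  refine ⟨key, fun hne => ⟨α • y, p, ?_, ?_⟩⟩
  · rintro ⟨hz, hq⟩
    apply hne
    have : y = 0 := by
      rcases smul_eq_zero.1 hz with h | h
      · exact absurd h hα₀.ne'
      · exact h
    simp [this, hq]
  · have hbound : Real.sqrt (‖y‖ ^ 2 + ‖p‖ ^ 2) * Real.sqrt (‖α • y‖ ^ 2 + ‖p‖ ^ 2)
        ≤ ‖y‖ ^ 2 + ‖p‖ ^ 2 := by
      have h1 : ‖α • y‖ ^ 2 + ‖p‖ ^ 2 ≤ ‖y‖ ^ 2 + ‖p‖ ^ 2 := by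
        rw [norm_smul, Real.norm_eq_abs]
        have : |α| ≤ 1 := by rw [abs_of_pos hα₀]; exact hα₁
        nlinarith [mul_nonneg (mul_nonneg (sub_nonneg.2 this)
          (by positivity : (0:ℝ) ≤ 1 + |α|)) (sq_nonneg ‖y‖)]
      calc Real.sqrt (‖y‖ ^ 2 + ‖p‖ ^ 2) * Real.sqrt (‖α • y‖ ^ 2 + ‖p‖ ^ 2)
          ≤ Real.sqrt (‖y‖ ^ 2 + ‖p‖ ^ 2) * Real.sqrt (‖y‖ ^ 2 + ‖p‖ ^ 2) :=
            mul_le_mul_of_nonneg_left (Real.sqrt_le_sqrt h1) (Real.sqrt_nonneg _)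
        _ = ‖y‖ ^ 2 + ‖p‖ ^ 2 := Real.mul_self_sqrt (by positivity)
    have : α * γ * (Real.sqrt (‖y‖ ^ 2 + ‖p‖ ^ 2) * Real.sqrt (‖α • y‖ ^ 2 + ‖p‖ ^ 2))
        ≤ α * γ * (‖y‖ ^ 2 + ‖p‖ ^ 2) :=
      mul_le_mul_of_nonneg_left hbound (by positivity)
    calc α * γ * Real.sqrt (‖y‖ ^ 2 + ‖p‖ ^ 2) * Real.sqrt (‖α • y‖ ^ 2 + ‖p‖ ^ 2)
        ≤ α * γ * (‖y‖ ^ 2 + ‖p‖ ^ 2) := by linarith [this]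
      _ ≤ _ := key
end
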